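/- Let S be a numerical semigroup whose Hilbert function H_R (of R = k[[S]]) is decreasing at level h, i.e. H_R(h) < H_R(h−1). Then there exist two distinct elements x_1, x_2 ∈ D_h such that |Supp(x_r + e)| ≥ 2 for r = 1, 2. -/

import Mathlib

open Set

/-- A numerical semigroup: a cofinite submonoid of ℕ. -/
def IsNumSgp (S : Set ℕ) : Prop :=
  0 ∈ S ∧ (∀ a ∈ S, ∀ b ∈ S, a + b ∈ S) ∧ Sᶜ.Finite

/-- The maximal ideal `M = S \ {0}`. -/
def MS (S : Set ℕ) : Set ℕ := S \ {0}

/-- The multiplicity `e` of `S`, the smallest nonzero element. -/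
noncomputable def mult (S : Set ℕ) : ℕ := sInf (MS S)

/-- `nM S h` is the set of sums of `h` elements of `M = S \ {0}` (with `nM S 0 = {0}`). -/
def nM (S : Set ℕ) : ℕ → Set ℕ
  | 0 => {0}
  | k + 1 => {x | ∃ a ∈ MS S, ∃ b ∈ nM S k, x = a + b}

/-- The order of `s`: the largest `h` with `s ∈ hM`. -/
noncomputable def ordS (S : Set ℕ) (s : ℕ) : ℕ := sSup {h | s ∈ nM S h}

/-- The Apéry set of `S` with respect to the multiplicity `e`:
elements `s ∈ S` with `s - e ∉ S`. -/
def Ap (S : Set ℕ) : Set ℕ := {s ∈ S | ∀ t ∈ S, t + mult S ≠ s}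

/-- Elements of the Apéry set of order `k`. -/
def ApK (S : Set ℕ) (k : ℕ) : Set ℕ := {s ∈ Ap S | ordS S s = k}

/-- `C_k = {s ∈ S : ord s = k and s - e ∉ (k-1)M}`. -/
def CK (S : Set ℕ) (k : ℕ) : Set ℕ :=
  {s ∈ S | ordS S s = k ∧ ∀ t ∈ nM S (k - 1), t + mult S ≠ s}

/-- `D_k = {s ∈ S : ord s = k-1 and ord (s+e) > k}`. -/
def DK (S : Set ℕ) (k : ℕ) : Set ℕ :=
  {s ∈ S | ordS S s = k - 1 ∧ k < ordS S (s + mult S)}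

/-- The Hilbert function of `R = k[[S]]`: `H(0) = 1`, `H(n) = |nM \ (n+1)M|`. -/
noncomputable def HF (S : Set ℕ) (n : ℕ) : ℕ := (nM S n \ nM S (n + 1)).ncard

/-- The set of minimal generators of `S`. -/
def MinGens (S : Set ℕ) : Set ℕ :=
  MS S \ {x | ∃ a ∈ MS S, ∃ b ∈ MS S, x = a + b}

/-- `a` is a maximal representation of `s`: a finitely supported coefficient
function on the minimal generators with `Σ aⱼ nⱼ = s` and `Σ aⱼ = ord s`. -/
def IsMaxRep (S : Set ℕ) (s : ℕ) (a : ℕ →₀ ℕ) : Prop :=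
  (↑a.support : Set ℕ) ⊆ MinGens S ∧
  (a.sum fun n c => c * n) = s ∧
  (a.sum fun _ c => c) = ordS S s

/-- `|Supp(s)|`: the maximal number of distinct minimal generators appearing
in a maximal representation of `s`. -/
noncomputable def SuppCard (S : Set ℕ) (s : ℕ) : ℕ :=
  sSup {q | ∃ a : ℕ →₀ ℕ, IsMaxRep S s a ∧ a.support.card = q}

/-- The Frobenius number of `S`. -/
noncomputable def Frob (S : Set ℕ) : ℕ := sSup Sᶜ
section NSG

variable {S : Set ℕ}

/-! ### Basic facts -/

lemma nsg_S_add (hS : IsNumSgp S) {a b : ℕ} (ha : a ∈ S) (hb : b ∈ S) : a + b ∈ S :=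
  hS.2.1 a ha b hb

lemma nsg_MS_mem {x : ℕ} (hx : x ∈ MS S) : x ∈ S := hx.1

lemma nsg_MS_ne {x : ℕ} (hx : x ∈ MS S) : x ≠ 0 := hx.2

lemma nsg_mem_MS {x : ℕ} (hx : x ∈ S) (h0 : x ≠ 0) : x ∈ MS S := ⟨hx, h0⟩

lemma nsg_MS_add (hS : IsNumSgp S) {a b : ℕ} (ha : a ∈ MS S) (hb : b ∈ MS S) : a + b ∈ MS S :=
  ⟨nsg_S_add hS ha.1 hb.1, by have := nsg_MS_ne ha; simp only [Set.mem_singleton_iff]; omega⟩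

lemma nsg_MS_nonempty (hS : IsNumSgp S) : (MS S).Nonempty := by
  have h1 : S.Infinite := by
    have := hS.2.2.infinite_compl
    rwa [compl_compl] at this
  exact (h1.diff (Set.finite_singleton 0)).nonempty

lemma nsg_mult_mem (hS : IsNumSgp S) : mult S ∈ MS S := Nat.sInf_mem (nsg_MS_nonempty hS)

lemma nsg_mult_pos (hS : IsNumSgp S) : 1 ≤ mult S := by
  have := nsg_MS_ne (nsg_mult_mem hS); omega

lemma nsg_mult_le (hS : IsNumSgp S) {m : ℕ} (hm : m ∈ MS S) : mult S ≤ m := Nat.sInf_le hm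

/-! ### nM basics -/

lemma nsg_nM_zero {s : ℕ} (hs : s ∈ nM S 0) : s = 0 := by simpa [nM] using hs

lemma nsg_zero_mem_nM_zero : (0 : ℕ) ∈ nM S 0 := by simp [nM]

lemma nsg_nM_succ_iff {k x : ℕ} :
    x ∈ nM S (k + 1) ↔ ∃ a ∈ MS S, ∃ b ∈ nM S k, x = a + b := by
  simp [nM]

lemma nsg_mem_nM_one {m : ℕ} (hm : m ∈ MS S) : m ∈ nM S 1 :=
  nsg_nM_succ_iff.2 ⟨m, hm, 0, nsg_zero_mem_nM_zero, by omega⟩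

lemma nsg_nM_le : ∀ {k s : ℕ}, s ∈ nM S k → k ≤ s := by
  intro k
  induction k with
  | zero => intro s _; omega
  | succ k ih =>
    intro s hs
    obtain ⟨a, ha, b, hb, rfl⟩ := nsg_nM_succ_iff.1 hs
    have h1 := ih hb
    have h2 := nsg_MS_ne ha
    omega

lemma nsg_nM_sub_S (hS : IsNumSgp S) : ∀ {k s : ℕ}, s ∈ nM S k → s ∈ S := by
  intro k
  induction k with
  | zero => intro s hs; rw [nsg_nM_zero hs]; exact hS.1
  | succ k ih =>
    intro s hs
    obtain ⟨a, ha, b, hb, rfl⟩ := nsg_nM_succ_iff.1 hs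
    exact nsg_S_add hS ha.1 (ih hb)

lemma nsg_nM_add : ∀ {j k x y : ℕ}, x ∈ nM S j → y ∈ nM S k → x + y ∈ nM S (j + k) := by
  intro j
  induction j with
  | zero =>
    intro k x y hx hy
    have : x = 0 := nsg_nM_zero hx
    subst this
    simpa using hy
  | succ j ih =>
    intro k x y hx hy
    obtain ⟨a, ha, b, hb, rfl⟩ := nsg_nM_succ_iff.1 hx
    have : j + 1 + k = (j + k) + 1 := by omega
    rw [this]
    exact nsg_nM_succ_iff.2 ⟨a, ha, b + y, ih hb hy, by omega⟩

lemma nsg_nM_pow (hS : IsNumSgp S) {m : ℕ} (hm : m ∈ MS S) : ∀ k : ℕ, k * m ∈ nM S k := by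
  intro k
  induction k with
  | zero => simpa using nsg_zero_mem_nM_zero
  | succ k ih =>
    have : (k + 1) * m = m + k * m := by ring
    rw [this]
    have h2 := nsg_nM_add (nsg_mem_nM_one hm) ih
    rwa [show 1 + k = k + 1 by omega] at h2

lemma nsg_nM_add_left (hS : IsNumSgp S) :
    ∀ {k : ℕ}, 1 ≤ k → ∀ {a b : ℕ}, a ∈ MS S → b ∈ nM S k → a + b ∈ nM S k := by
  intro k
  induction k with
  | zero => omega
  | succ k ih =>
    intro _ a b ha hb
    obtain ⟨a', ha', b', hb', rfl⟩ := nsg_nM_succ_iff.1 hb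
    rcases Nat.eq_zero_or_pos k with hk | hk
    · subst hk
      have hb0 : b' = 0 := nsg_nM_zero hb'
      subst hb0
      exact nsg_nM_succ_iff.2 ⟨a + a', nsg_MS_add hS ha ha', 0, nsg_zero_mem_nM_zero, by omega⟩
    · exact nsg_nM_succ_iff.2 ⟨a', ha', a + b', ih hk ha hb', by omega⟩

lemma nsg_nM_succ_subset (hS : IsNumSgp S) {k : ℕ} (hk : 1 ≤ k) : nM S (k + 1) ⊆ nM S k := by
  intro s hs
  obtain ⟨a, ha, b, hb, rfl⟩ := nsg_nM_succ_iff.1 hs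
  exact nsg_nM_add_left hS hk ha hb

lemma nsg_nM_subset (hS : IsNumSgp S) {j k : ℕ} (hj : 1 ≤ j) (hjk : j ≤ k) :
    nM S k ⊆ nM S j := by
  induction k, hjk using Nat.le_induction with
  | base => exact subset_rfl
  | succ k hk ih =>
    intro s hs
    exact ih (nsg_nM_succ_subset hS (hj.trans hk) hs)

/-! ### order basics -/

lemma nsg_ord_bdd {s : ℕ} : BddAbove {h : ℕ | s ∈ nM S h} :=
  ⟨s, fun _ hk => nsg_nM_le hk⟩

lemma nsg_ord_ge {s k : ℕ} (hk : s ∈ nM S k) : k ≤ ordS S s :=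
  le_csSup nsg_ord_bdd hk

lemma nsg_ord_mem {s : ℕ} (hs : s ∈ MS S) : s ∈ nM S (ordS S s) := by
  have h1 : (1 : ℕ) ∈ {k : ℕ | s ∈ nM S k} := nsg_mem_nM_one hs
  have h2 := Nat.sSup_mem ⟨1, h1⟩ (nsg_ord_bdd (s := s))
  exact h2

lemma nsg_ord_pos {s : ℕ} (hs : s ∈ MS S) : 1 ≤ ordS S s :=
  nsg_ord_ge (nsg_mem_nM_one hs)

lemma nsg_mem_nM_of_le (hS : IsNumSgp S) {s k : ℕ} (hs : s ∈ MS S) (h1 : 1 ≤ k)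
    (hk : k ≤ ordS S s) : s ∈ nM S k :=
  nsg_nM_subset hS h1 hk (nsg_ord_mem hs)

lemma nsg_ord_zero : ordS S 0 = 0 := by
  have h1 : {h : ℕ | (0 : ℕ) ∈ nM S h} = {0} := by
    ext k
    simp only [Set.mem_setOf_eq, Set.mem_singleton_iff]
    constructor
    · intro hk; have := nsg_nM_le hk; omega
    · rintro rfl; exact nsg_zero_mem_nM_zero
  rw [ordS, h1, csSup_singleton]

/-! ### strata -/

lemma nsg_strata_finite (hS : IsNumSgp S) (n : ℕ) : (nM S n \ nM S (n + 1)).Finite := by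
  apply Set.Finite.subset (Set.finite_Iic (sSup Sᶜ + (n + 2) * mult S))
  rintro s ⟨hs1, hs2⟩
  simp only [Set.mem_Iic]
  by_contra hgt
  push_neg at hgt
  have he : 1 ≤ mult S := nsg_mult_pos hS
  have hmul1 : (n + 2) * mult S = (n + 1) * mult S + mult S := by ring
  have hm : s - (n + 1) * mult S ∈ S := by
    by_contra hns
    have : s - (n + 1) * mult S ≤ sSup Sᶜ := le_csSup hS.2.2.bddAbove hns
    omega
  have hm0 : s - (n + 1) * mult S ≠ 0 := by omega
  have hmem : (s - (n + 1) * mult S) + (n + 1) * mult S ∈ nM S (1 + (n + 1)) :=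
    nsg_nM_add (nsg_mem_nM_one ⟨hm, hm0⟩) (nsg_nM_pow hS (nsg_mult_mem hS) (n + 1))
  have hseq : (s - (n + 1) * mult S) + (n + 1) * mult S = s := by omega
  rw [hseq] at hmem
  have : (1 : ℕ) + (n + 1) = n + 2 := by omega
  rw [this] at hmem
  exact hs2 (nsg_nM_succ_subset hS (by omega) hmem)

lemma nsg_DK_strata (hS : IsNumSgp S) {h : ℕ} (hh : 2 ≤ h) :
    DK S h ⊆ nM S (h - 1) \ nM S h := by
  rintro x ⟨hxS, hord, _⟩
  have hx0 : x ≠ 0 := by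
    intro h0; subst h0; rw [nsg_ord_zero] at hord; omega
  constructor
  · have := nsg_ord_mem (S := S) ⟨hxS, hx0⟩
    rwa [hord] at this
  · intro hmem
    have := nsg_ord_ge hmem
    omega

lemma nsg_CK_strata (hS : IsNumSgp S) {h : ℕ} (hh : 2 ≤ h) :
    CK S h ⊆ nM S h \ nM S (h + 1) := by
  rintro s ⟨hsS, hord, _⟩
  have hs0 : s ≠ 0 := by
    intro h0; subst h0; rw [nsg_ord_zero] at hord; omega
  constructor
  · have := nsg_ord_mem (S := S) ⟨hsS, hs0⟩
    rwa [hord] at this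
  · intro hmem
    have := nsg_ord_ge hmem
    omega

lemma nsg_DK_finite (hS : IsNumSgp S) {h : ℕ} (hh : 2 ≤ h) : (DK S h).Finite := by
  have hfin := nsg_strata_finite hS (h - 1)
  rw [show h - 1 + 1 = h by omega] at hfin
  exact hfin.subset (nsg_DK_strata hS hh)

lemma nsg_CK_finite (hS : IsNumSgp S) {h : ℕ} (hh : 2 ≤ h) : (CK S h).Finite := by
  exact (nsg_strata_finite hS h).subset (nsg_CK_strata hS hh)

/-! ### counting -/

lemma nsg_counting (hS : IsNumSgp S) {h : ℕ} (hh : 2 ≤ h) (hdec : HF S h < HF S (h - 1)) :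
    (CK S h).ncard + 1 ≤ (DK S h).ncard := by
  have e1 : h - 1 + 1 = h := by omega
  set A1 : Set ℕ := nM S (h - 1) \ nM S h with hA1_def
  set A2 : Set ℕ := nM S h \ nM S (h + 1) with hA2_def
  have hA1fin : A1.Finite := by
    have := nsg_strata_finite hS (h - 1); rwa [e1] at this
  have hA2fin : A2.Finite := nsg_strata_finite hS h
  have HF1 : HF S (h - 1) = A1.ncard := by rw [HF, e1]
  have HF2 : HF S h = A2.ncard := rfl
  have hD : DK S h ⊆ A1 := nsg_DK_strata hS hh
  have hC : CK S h ⊆ A2 := nsg_CK_strata hS hh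
  have maps : ∀ s ∈ A1 \ DK S h, s + mult S ∈ A2 \ CK S h := by
    rintro s ⟨⟨hs1, hs2⟩, hsD⟩
    have hsS : s ∈ S := nsg_nM_sub_S hS hs1
    have hs0 : s ≠ 0 := by have := nsg_nM_le hs1; omega
    have hords : ordS S s = h - 1 := by
      refine le_antisymm ?_ (nsg_ord_ge hs1)
      by_contra hlt
      push_neg at hlt
      exact hs2 (nsg_mem_nM_of_le hS ⟨hsS, hs0⟩ (by omega) (by omega))
    have hse_mem : s + mult S ∈ nM S h := by
      have := nsg_nM_add hs1 (nsg_mem_nM_one (nsg_mult_mem hS))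
      rwa [e1] at this
    have horde : ordS S (s + mult S) = h := by
      refine le_antisymm ?_ (nsg_ord_ge hse_mem)
      by_contra hlt
      push_neg at hlt
      exact hsD ⟨hsS, hords, by omega⟩
    constructor
    · constructor
      · exact hse_mem
      · intro hmem
        have := nsg_ord_ge hmem
        omega
    · rintro ⟨_, _, hck⟩
      exact hck s hs1 rfl
  have inj : Set.InjOn (· + mult S) (A1 \ DK S h) := fun a _ b _ hab => by
    simpa using hab
  have card1 : (A1 \ DK S h).ncard ≤ (A2 \ CK S h).ncard :=
    Set.ncard_le_ncard_of_injOn _ maps inj hA2fin.diff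
  have d1 : (A1 \ DK S h).ncard + (DK S h).ncard = A1.ncard :=
    Set.ncard_diff_add_ncard_of_subset hD hA1fin
  have d2 : (A2 \ CK S h).ncard + (CK S h).ncard = A2.ncard :=
    Set.ncard_diff_add_ncard_of_subset hC hA2fin
  rw [HF1, HF2] at hdec
  omega

/-! ### representations -/

/-- value of a representation -/
def fval (a : ℕ →₀ ℕ) : ℕ := a.sum fun n c => c * n

/-- total number of parts of a representation -/
def ftot (a : ℕ →₀ ℕ) : ℕ := a.sum fun _ c => c

lemma fval_add (f g : ℕ →₀ ℕ) : fval (f + g) = fval f + fval g := by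
  apply Finsupp.sum_add_index' <;> intros <;> simp [add_mul]

lemma ftot_add (f g : ℕ →₀ ℕ) : ftot (f + g) = ftot f + ftot g := by
  apply Finsupp.sum_add_index' <;> intros <;> simp

lemma fval_single (n b : ℕ) : fval (Finsupp.single n b) = b * n :=
  Finsupp.sum_single_index (by simp)

lemma ftot_single (n b : ℕ) : ftot (Finsupp.single n b) = b :=
  Finsupp.sum_single_index rfl

lemma fval_zero : fval 0 = 0 := rfl

lemma ftot_zero : ftot 0 = 0 := rfl

lemma card_le_ftot (f : ℕ →₀ ℕ) : f.support.card ≤ ftot f := by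
  classical
  calc f.support.card = (f.support.sum fun _ => 1) := by simp
    _ ≤ f.support.sum (fun n => f n) := Finset.sum_le_sum
        (by intro i hi; exact Nat.one_le_iff_ne_zero.2 (Finsupp.mem_support_iff.1 hi))
    _ = ftot f := rfl

lemma supp_sub_of_le {p a : ℕ →₀ ℕ} (h : p ≤ a) : p.support ⊆ a.support := by
  intro n hn
  have h1 := Finsupp.mem_support_iff.1 hn
  have h2 := Finsupp.le_def.1 h n
  exact Finsupp.mem_support_iff.2 (by omega)

lemma ftot_mono {p a : ℕ →₀ ℕ} (h : p ≤ a) : ftot p ≤ ftot a := by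
  rw [ftot, ftot, Finsupp.sum_of_support_subset p (supp_sub_of_le h) _ (fun i _ => rfl)]
  exact Finset.sum_le_sum (fun i _ => Finsupp.le_def.1 h i)

lemma nsg_fill (a : ℕ →₀ ℕ) :
    ∀ t : ℕ, ∀ p₀ : ℕ →₀ ℕ, p₀ ≤ a → ftot p₀ + t ≤ ftot a →
      ∃ p, p₀ ≤ p ∧ p ≤ a ∧ ftot p = ftot p₀ + t := by
  intro t
  induction t with
  | zero => exact fun p₀ h1 _ => ⟨p₀, le_refl _, h1, by omega⟩
  | succ t ih =>
    intro p₀ h1 h2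
    obtain ⟨p, hp1, hp2, hp3⟩ := ih p₀ h1 (by omega)
    have hlt : ftot p < ftot a := by omega
    have hex : ∃ n, p n < a n := by
      by_contra hc
      push_neg at hc
      have : ftot a ≤ ftot p := ftot_mono (Finsupp.le_def.2 hc)
      omega
    obtain ⟨n, hn⟩ := hex
    refine ⟨p + Finsupp.single n 1, hp1.trans (self_le_add_right p _), ?_, ?_⟩
    · rw [Finsupp.le_def]
      intro m
      rcases eq_or_ne n m with rfl | hne
      · have := Finsupp.le_def.1 hp2 n
        simp only [Finsupp.add_apply, Finsupp.single_eq_same]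
        omega
      · simp only [Finsupp.add_apply, Finsupp.single_eq_of_ne' hne, add_zero]
        exact Finsupp.le_def.1 hp2 m
    · rw [ftot_add, ftot_single]; omega

lemma nsg_minGens_sub : MinGens S ⊆ MS S := fun _ hx => hx.1

lemma nsg_repr_mem_nM (hS : IsNumSgp S) {a : ℕ →₀ ℕ} (ha : ↑a.support ⊆ MS S) :
    fval a ∈ nM S (ftot a) := by
  classical
  induction a using Finsupp.induction with
  | zero => simpa [fval_zero, ftot_zero] using nsg_zero_mem_nM_zero
  | single_add n b f hnf hb ih =>
    have hn : n ∈ MS S := by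
      apply ha
      have hval : (Finsupp.single n b + f) n ≠ 0 := by
        rw [Finsupp.add_apply, Finsupp.single_eq_same, Finsupp.notMem_support_iff.1 hnf]
        omega
      exact Finset.mem_coe.2 (Finsupp.mem_support_iff.2 hval)
    have hf : ↑f.support ⊆ MS S := by
      intro m hm
      apply ha
      have hm' : m ∈ f.support := hm
      have hmn : m ≠ n := by rintro rfl; exact hnf hm'
      simp only [Finset.mem_coe, Finsupp.mem_support_iff] at hm' ⊢
      have : (Finsupp.single n b + f) m = 0 + f m := by
        simp [Finsupp.single_eq_of_ne' (Ne.symm hmn)]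
      rw [this]
      omega
    rw [fval_add, ftot_add, fval_single, ftot_single]
    exact nsg_nM_add (nsg_nM_pow hS hn b) (ih hf)

lemma nsg_exists_rep_MS (hS : IsNumSgp S) :
    ∀ m : ℕ, m ∈ MS S → ∃ a : ℕ →₀ ℕ, ↑a.support ⊆ MinGens S ∧ fval a = m ∧ 1 ≤ ftot a := by
  intro m
  induction m using Nat.strong_induction_on with
  | _ m ih =>
    intro hm
    by_cases hg : m ∈ MinGens S
    · refine ⟨Finsupp.single m 1, ?_, ?_, ?_⟩
      · rw [Finsupp.support_single_ne_zero m one_ne_zero]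
        simpa using hg
      · rw [fval_single]; omega
      · rw [ftot_single]
    · have hsum : ∃ u ∈ MS S, ∃ v ∈ MS S, m = u + v := by
        by_contra hc
        exact hg ⟨hm, by simpa using hc⟩
      obtain ⟨u, hu, v, hv, rfl⟩ := hsum
      have hu0 := nsg_MS_ne hu
      have hv0 := nsg_MS_ne hv
      obtain ⟨au, hau1, hau2, hau3⟩ := ih u (by omega) hu
      obtain ⟨av, hav1, hav2, hav3⟩ := ih v (by omega) hv
      refine ⟨au + av, ?_, ?_, ?_⟩
      · exact fun n hn => by
          rcases Finset.mem_union.1 (Finsupp.support_add hn) with h | h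
          · exact hau1 h
          · exact hav1 h
      · rw [fval_add, hau2, hav2]
      · rw [ftot_add]; omega

lemma nsg_exists_rep_nM (hS : IsNumSgp S) :
    ∀ k : ℕ, ∀ s : ℕ, s ∈ nM S k →
      ∃ a : ℕ →₀ ℕ, ↑a.support ⊆ MinGens S ∧ fval a = s ∧ k ≤ ftot a := by
  intro k
  induction k with
  | zero =>
    intro s hs
    refine ⟨0, by simp, ?_, by omega⟩
    rw [fval_zero, nsg_nM_zero hs]
  | succ k ih =>
    intro s hs
    obtain ⟨m, hm, b, hb, rfl⟩ := nsg_nM_succ_iff.1 hs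
    obtain ⟨am, ham1, ham2, ham3⟩ := nsg_exists_rep_MS hS m hm
    obtain ⟨ab, hab1, hab2, hab3⟩ := ih b hb
    refine ⟨am + ab, ?_, ?_, ?_⟩
    · exact fun n hn => by
        rcases Finset.mem_union.1 (Finsupp.support_add hn) with h | h
        · exact ham1 h
        · exact hab1 h
    · rw [fval_add, ham2, hab2]
    · rw [ftot_add]; omega

lemma nsg_maxrep_exists (hS : IsNumSgp S) {s : ℕ} (hs : s ∈ S) : ∃ a, IsMaxRep S s a := by
  rcases eq_or_ne s 0 with rfl | hs0
  · refine ⟨0, by simp, ?_, ?_⟩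
    · exact fval_zero
    · show ftot 0 = ordS S 0
      rw [ftot_zero, nsg_ord_zero]
  · have hsM : s ∈ MS S := ⟨hs, hs0⟩
    obtain ⟨a, ha1, ha2, ha3⟩ := nsg_exists_rep_nM hS (ordS S s) s (nsg_ord_mem hsM)
    have hle : ftot a ≤ ordS S s := by
      have := nsg_repr_mem_nM hS (ha1.trans nsg_minGens_sub)
      rw [ha2] at this
      exact nsg_ord_ge this
    exact ⟨a, ha1, ha2, by
      show ftot a = ordS S s
      omega⟩

/-! ### SuppCard -/

lemma nsg_QS_bdd {s : ℕ} :
    BddAbove {q | ∃ a : ℕ →₀ ℕ, IsMaxRep S s a ∧ a.support.card = q} := by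
  refine ⟨ordS S s, ?_⟩
  rintro q ⟨a, ha, rfl⟩
  calc a.support.card ≤ ftot a := card_le_ftot a
    _ = ordS S s := ha.2.2

lemma nsg_suppcard_ge {s : ℕ} {a : ℕ →₀ ℕ} (ha : IsMaxRep S s a) :
    a.support.card ≤ SuppCard S s :=
  le_csSup nsg_QS_bdd ⟨a, ha, rfl⟩

lemma nsg_exists_maxrep_card2 (hS : IsNumSgp S) {s : ℕ} (hs : s ∈ S)
    (h2 : 2 ≤ SuppCard S s) : ∃ a, IsMaxRep S s a ∧ 2 ≤ a.support.card := by
  have hne : {q | ∃ a : ℕ →₀ ℕ, IsMaxRep S s a ∧ a.support.card = q}.Nonempty := by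
    obtain ⟨a, ha⟩ := nsg_maxrep_exists hS hs
    exact ⟨a.support.card, a, ha, rfl⟩
  have hmem := Nat.sSup_mem hne nsg_QS_bdd
  obtain ⟨a, ha, hc⟩ := hmem
  exact ⟨a, ha, by rw [hc]; exact h2⟩

/-! ### subsums of maximal representations land in `CK` -/

lemma nsg_subsum_CK (hS : IsNumSgp S) {h x : ℕ} (hh : 2 ≤ h) (hx : x ∈ DK S h)
    {a : ℕ →₀ ℕ} (ha : IsMaxRep S (x + mult S) a) {p : ℕ →₀ ℕ} (hpa : p ≤ a)
    (hpt : ftot p = h) : fval p ∈ CK S h := by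
  set e := mult S with he_def
  set A := ordS S (x + e) with hA_def
  have hhA : h < A := hx.2.2
  have har : a = p + (a - p) := (add_tsub_cancel_of_le hpa).symm
  set r := a - p with hr_def
  have hsupp_p : ↑p.support ⊆ MinGens S := fun n hn =>
    ha.1 (supp_sub_of_le hpa hn)
  have hsupp_r : ↑r.support ⊆ MinGens S := by
    intro n hn
    apply ha.1
    have h1 : r n ≠ 0 := Finsupp.mem_support_iff.1 hn
    have h2 : r n = a n - p n := Finsupp.tsub_apply a p n
    exact Finsupp.mem_support_iff.2 (by omega)
  have hval : fval a = fval p + fval r := by rw [har, fval_add]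
  have htot : ftot a = ftot p + ftot r := by rw [har, ftot_add]
  have htota : ftot a = A := ha.2.2
  have hvala : fval a = x + e := ha.2.1
  have htotr : ftot r = A - h := by omega
  have hvp : fval p ∈ nM S h := by
    have := nsg_repr_mem_nM hS (hsupp_p.trans nsg_minGens_sub)
    rwa [hpt] at this
  have hvr : fval r ∈ nM S (ftot r) :=
    nsg_repr_mem_nM hS (hsupp_r.trans nsg_minGens_sub)
  have hvpS : fval p ∈ S := nsg_nM_sub_S hS hvp
  have hvp0 : fval p ≠ 0 := by have := nsg_nM_le hvp; omega
  refine ⟨hvpS, ?_, ?_⟩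
  · refine le_antisymm ?_ (nsg_ord_ge hvp)
    by_contra hlt
    push_neg at hlt
    have h1 : fval p ∈ nM S (h + 1) :=
      nsg_mem_nM_of_le hS ⟨hvpS, hvp0⟩ (by omega) (by omega)
    have h2 : fval p + fval r ∈ nM S (h + 1 + ftot r) := nsg_nM_add h1 hvr
    rw [← hval, hvala] at h2
    have := nsg_ord_ge h2
    omega
  · intro t ht heq
    have hxeq : x = t + fval r := by
      have h1 : x + e = fval p + fval r := by rw [← hvala, hval]
      omega
    have h2 : t + fval r ∈ nM S (h - 1 + ftot r) := nsg_nM_add ht hvr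
    rw [← hxeq] at h2
    have h3 := nsg_ord_ge h2
    have h4 : ordS S x = h - 1 := hx.2.1
    omega

/-! ### structure of `D_h` elements with small support -/

lemma nsg_T_exists (hS : IsNumSgp S) {h x : ℕ} (hh : 2 ≤ h) (hx : x ∈ DK S h)
    (hT : SuppCard S (x + mult S) < 2) :
    ∃ n, n ∈ MinGens S ∧ x + mult S = ordS S (x + mult S) * n := by
  have hxe : x + mult S ∈ S := nsg_S_add hS hx.1 (nsg_mult_mem hS).1
  obtain ⟨a, ha⟩ := nsg_maxrep_exists hS hxe
  have hcard : a.support.card ≤ 1 := by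
    have := nsg_suppcard_ge ha
    omega
  have hA : h < ordS S (x + mult S) := hx.2.2
  have htot : ftot a = ordS S (x + mult S) := ha.2.2
  have hpos : 0 < a.support.card := by
    rcases Finset.eq_empty_or_nonempty a.support with he | hne
    · exfalso
      have h0 : a = 0 := Finsupp.support_eq_empty.1 he
      rw [h0, ftot_zero] at htot
      omega
    · exact Finset.card_pos.2 hne
  obtain ⟨m, hm⟩ := Finset.card_eq_one.1 (le_antisymm hcard hpos)
  have hval : fval a = a m * m := by
    rw [fval, Finsupp.sum, hm, Finset.sum_singleton]
  have htot' : ftot a = a m := by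
    rw [ftot, Finsupp.sum, hm, Finset.sum_singleton]
  have hvala : fval a = x + mult S := ha.2.1
  have ham : a m = ordS S (x + mult S) := by rw [← htot', htot]
  refine ⟨m, ?_, ?_⟩
  · apply ha.1
    rw [hm]
    simp
  · calc x + mult S = fval a := hvala.symm
      _ = a m * m := hval
      _ = ordS S (x + mult S) * m := by rw [ham]

lemma nsg_T_CK (hS : IsNumSgp S) {h x n : ℕ} (hh : 2 ≤ h) (hx : x ∈ DK S h)
    (hT : SuppCard S (x + mult S) < 2) (hn : n ∈ MinGens S)
    (hxe : x + mult S = ordS S (x + mult S) * n) : h * n ∈ CK S h := by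
  have hxeS : x + mult S ∈ S := nsg_S_add hS hx.1 (nsg_mult_mem hS).1
  obtain ⟨a, ha⟩ := nsg_maxrep_exists hS hxeS
  have hcard : a.support.card ≤ 1 := by
    have := nsg_suppcard_ge ha
    omega
  have hA : h < ordS S (x + mult S) := hx.2.2
  have htot : ftot a = ordS S (x + mult S) := ha.2.2
  have hpos : 0 < a.support.card := by
    rcases Finset.eq_empty_or_nonempty a.support with he | hne
    · exfalso
      have h0 : a = 0 := Finsupp.support_eq_empty.1 he
      rw [h0, ftot_zero] at htot
      omega
    · exact Finset.card_pos.2 hne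
  obtain ⟨m, hm⟩ := Finset.card_eq_one.1 (le_antisymm hcard hpos)
  have hval : fval a = a m * m := by
    rw [fval, Finsupp.sum, hm, Finset.sum_singleton]
  have htot' : ftot a = a m := by
    rw [ftot, Finsupp.sum, hm, Finset.sum_singleton]
  have hmn : m = n := by
    have hvala : fval a = x + mult S := ha.2.1
    have ham : a m = ordS S (x + mult S) := by rw [← htot', htot]
    have h1 : ordS S (x + mult S) * m = ordS S (x + mult S) * n := by
      calc ordS S (x + mult S) * m = a m * m := by rw [ham]
        _ = fval a := hval.symm
        _ = x + mult S := hvala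
        _ = ordS S (x + mult S) * n := hxe
    exact Nat.eq_of_mul_eq_mul_left (by omega) h1
  subst hmn
  have hple : Finsupp.single m h ≤ a := by
    rw [Finsupp.le_def]
    intro i
    rcases eq_or_ne m i with rfl | hne
    · rw [Finsupp.single_eq_same]
      have : a m = ordS S (x + mult S) := by rw [← htot', htot]
      omega
    · rw [Finsupp.single_eq_of_ne' hne]
      omega
  have := nsg_subsum_CK hS hh hx ha hple (ftot_single m h)
  rwa [fval_single] at this

lemma nsg_psi_lt_absurd (hS : IsNumSgp S) {h x x' n : ℕ} (hh : 2 ≤ h)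
    (hx : x ∈ DK S h) (hx' : x' ∈ DK S h) (hn : n ∈ MinGens S)
    (e1 : x + mult S = ordS S (x + mult S) * n)
    (e2 : x' + mult S = ordS S (x' + mult S) * n)
    (hlt : ordS S (x + mult S) < ordS S (x' + mult S)) : False := by
  set A := ordS S (x + mult S)
  set A' := ordS S (x' + mult S)
  set k := A' - A with hk_def
  have hk1 : 1 ≤ k := by omega
  have hAA : A' * n = A * n + k * n := by
    rw [← add_mul]
    congr 1
    omega
  have hx'eq : x' = x + k * n := by omega
  have hx0 : x ≠ 0 := by
    intro h0
    have := hx.2.1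
    rw [h0, nsg_ord_zero] at this
    omega
  have hxM : x ∈ MS S := ⟨hx.1, hx0⟩
  have hxnm : x ∈ nM S (h - 1) := by
    have := nsg_ord_mem hxM
    rwa [hx.2.1] at this
  have hkn : k * n ∈ nM S k := nsg_nM_pow hS (nsg_minGens_sub hn) k
  have hmem : x + k * n ∈ nM S (h - 1 + k) := nsg_nM_add hxnm hkn
  rw [← hx'eq] at hmem
  have h1 := nsg_ord_ge hmem
  have h2 : ordS S x' = h - 1 := hx'.2.1
  omega

lemma nsg_T_avoid (hS : IsNumSgp S) {h x n : ℕ} (hh : 2 ≤ h) (hx : x ∈ DK S h)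
    (hn : n ∈ MinGens S) (hxe : x + mult S = ordS S (x + mult S) * n)
    {p : ℕ →₀ ℕ} (hps : ↑p.support ⊆ MinGens S) (hpt : ftot p = h)
    (hpc : 2 ≤ p.support.card) (hpv : fval p = h * n) :
    2 ≤ SuppCard S (x + mult S) := by
  set A := ordS S (x + mult S) with hA_def
  have hhA : h < A := hx.2.2
  set q : ℕ →₀ ℕ := p + Finsupp.single n (A - h) with hq_def
  have hq_supp : ↑q.support ⊆ MinGens S := by
    intro i hi
    rcases Finset.mem_union.1 (Finsupp.support_add hi) with h1 | h1
    · exact hps h1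
    · have := Finsupp.support_single_subset h1
      simp only [Finset.mem_singleton] at this
      subst this
      exact hn
  have hq_val : fval q = x + mult S := by
    rw [hq_def, fval_add, fval_single, hpv, ← add_mul, show h + (A - h) = A by omega, hxe]
  have hq_tot : ftot q = A := by
    rw [hq_def, ftot_add, ftot_single, hpt]
    omega
  have hq_max : IsMaxRep S (x + mult S) q := ⟨hq_supp, hq_val, hq_tot⟩
  have hq_card : 2 ≤ q.support.card := by
    refine le_trans hpc (Finset.card_le_card ?_)
    intro i hi
    have h1 : p i ≠ 0 := Finsupp.mem_support_iff.1 hi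
    have h2 : q i = p i + Finsupp.single n (A - h) i := by rw [hq_def]; simp
    exact Finsupp.mem_support_iff.2 (by omega)
  exact le_trans hq_card (nsg_suppcard_ge hq_max)

open Classical in
/-- the function used for the injection of "pure-power" elements of `D_h` into `C_h` -/
noncomputable def nsgPsi (S : Set ℕ) (h : ℕ) (x : ℕ) : ℕ :=
  if hx : ∃ n, n ∈ MinGens S ∧ x + mult S = ordS S (x + mult S) * n then h * hx.choose else 0

lemma nsgPsi_spec {h x : ℕ}
    (hE : ∃ n, n ∈ MinGens S ∧ x + mult S = ordS S (x + mult S) * n) :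
    hE.choose ∈ MinGens S ∧ x + mult S = ordS S (x + mult S) * hE.choose ∧
      nsgPsi S h x = h * hE.choose :=
  ⟨hE.choose_spec.1, hE.choose_spec.2, by rw [nsgPsi, dif_pos hE]⟩

end NSG

theorem stmt10 (S : Set ℕ) (hS : IsNumSgp S) (h : ℕ) (hh : 1 ≤ h)
    (hdec : HF S h < HF S (h - 1)) :
    ∃ x₁ ∈ DK S h, ∃ x₂ ∈ DK S h, x₁ ≠ x₂ ∧
      2 ≤ SuppCard S (x₁ + mult S) ∧ 2 ≤ SuppCard S (x₂ + mult S) := by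
  classical
  -- Step 1 : the level `h` must be at least 2.
  have hh2 : 2 ≤ h := by
    by_contra hlt
    have h1 : h = 1 := by omega
    subst h1
    norm_num at hdec
    have hf0 : HF S 0 = 1 := by
      have hset : nM S 0 \ nM S 1 = {0} := by
        ext s
        constructor
        · rintro ⟨hs0, _⟩
          exact nsg_nM_zero hs0
        · intro hs
          have hs0 : s = 0 := hs
          subst hs0
          refine ⟨nsg_zero_mem_nM_zero, ?_⟩
          intro hmem
          have := nsg_nM_le hmem
          omega
      rw [HF, hset, Set.ncard_singleton]
    have hne : (nM S 1 \ nM S 2).Nonempty := by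
      refine ⟨mult S, nsg_mem_nM_one (nsg_mult_mem hS), ?_⟩
      intro hmem
      obtain ⟨a, ha, b, hb, heq⟩ := nsg_nM_succ_iff.1 hmem
      have h1 := nsg_mult_le hS ha
      have h2 := nsg_nM_le hb
      omega
    have hpos : 0 < HF S 1 := by
      rw [HF]
      exact (Set.ncard_pos (nsg_strata_finite hS 1)).2 hne
    omega
  by_contra hgoal
  -- Step 2 : notation and basic finiteness
  set Bs : Set ℕ := {x ∈ DK S h | 2 ≤ SuppCard S (x + mult S)} with hBs_def
  set Ts : Set ℕ := {x ∈ DK S h | SuppCard S (x + mult S) < 2} with hTs_def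
  have hsub : ∀ x ∈ Bs, ∀ y ∈ Bs, x = y := by
    intro x hx y hy
    by_contra hxy
    exact hgoal ⟨x, hx.1, y, hy.1, hxy, hx.2, hy.2⟩
  have hDK_fin : (DK S h).Finite := nsg_DK_finite hS hh2
  have hCK_fin : (CK S h).Finite := nsg_CK_finite hS hh2
  have hTs_sub : Ts ⊆ DK S h := fun x hx => hx.1
  have hBs_sub : Bs ⊆ DK S h := fun x hx => hx.1
  have hcount := nsg_counting hS hh2 hdec
  have hunion : DK S h ⊆ Ts ∪ Bs := by
    intro x hx
    rcases lt_or_ge (SuppCard S (x + mult S)) 2 with hc | hc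
    · exact Or.inl ⟨hx, hc⟩
    · exact Or.inr ⟨hx, hc⟩
  -- Step 3 : the map ψ on `Ts`
  have hTE : ∀ x ∈ Ts, ∃ n, n ∈ MinGens S ∧ x + mult S = ordS S (x + mult S) * n :=
    fun x hx => nsg_T_exists hS hh2 hx.1 hx.2
  have hmaps : ∀ x ∈ Ts, nsgPsi S h x ∈ CK S h := by
    intro x hx
    obtain ⟨hn, hxe, hpsi⟩ := nsgPsi_spec (hTE x hx)
    rw [hpsi]
    exact nsg_T_CK hS hh2 hx.1 hx.2 hn hxe
  have hinj : Set.InjOn (nsgPsi S h) Ts := by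
    intro x hx x' hx' heq
    obtain ⟨hn, hxe, hpsi⟩ := nsgPsi_spec (hTE x hx)
    obtain ⟨hn', hxe', hpsi'⟩ := nsgPsi_spec (hTE x' hx')
    rw [hpsi, hpsi'] at heq
    have hnn : (hTE x hx).choose = (hTE x' hx').choose :=
      Nat.eq_of_mul_eq_mul_left (by omega) heq
    rw [← hnn] at hxe'
    rcases lt_trichotomy (ordS S (x + mult S)) (ordS S (x' + mult S)) with hlt | heqo | hlt
    · exact (nsg_psi_lt_absurd hS hh2 hx.1 hx'.1 hn hxe hxe' hlt).elim
    · rw [← heqo] at hxe'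
      omega
    · exact (nsg_psi_lt_absurd hS hh2 hx'.1 hx.1 hn hxe' hxe hlt).elim
  -- Step 4 : case distinction on `Bs`
  rcases Set.eq_empty_or_nonempty Bs with hBe | ⟨b, hb⟩
  · -- no element with large support at all : contradiction with the counting
    have hDT : DK S h ⊆ Ts := by
      intro x hx
      rcases hunion hx with h1 | h1
      · exact h1
      · exact absurd h1 (by rw [hBe]; exact Set.notMem_empty x)
    have h1 : (DK S h).ncard ≤ Ts.ncard :=
      Set.ncard_le_ncard hDT (hDK_fin.subset hTs_sub)
    have h2 : Ts.ncard ≤ (CK S h).ncard :=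
      Set.ncard_le_ncard_of_injOn _ hmaps hinj hCK_fin
    omega
  · -- exactly one element `b` with large support
    have hbD : b ∈ DK S h := hb.1
    have hbe : b + mult S ∈ S := nsg_S_add hS hbD.1 (nsg_mult_mem hS).1
    obtain ⟨a, ha, hac⟩ := nsg_exists_maxrep_card2 hS hbe hb.2
    obtain ⟨m₁, hm₁, m₂, hm₂, hmne⟩ := Finset.one_lt_card.1 hac
    have ham1 : 1 ≤ a m₁ := Nat.one_le_iff_ne_zero.2 (Finsupp.mem_support_iff.1 hm₁)
    have ham2 : 1 ≤ a m₂ := Nat.one_le_iff_ne_zero.2 (Finsupp.mem_support_iff.1 hm₂)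
    set p₀ : ℕ →₀ ℕ := Finsupp.single m₁ 1 + Finsupp.single m₂ 1 with hp₀_def
    have hp₀m₁ : p₀ m₁ = 1 := by
      rw [hp₀_def]
      simp [Finsupp.single_eq_same, Finsupp.single_eq_of_ne' (Ne.symm hmne)]
    have hp₀m₂ : p₀ m₂ = 1 := by
      rw [hp₀_def]
      simp [Finsupp.single_eq_same, Finsupp.single_eq_of_ne' hmne]
    have hp₀_le : p₀ ≤ a := by
      rw [Finsupp.le_def]
      intro i
      rcases eq_or_ne m₁ i with rfl | h1
      · rw [hp₀m₁]; omega
      · rcases eq_or_ne m₂ i with rfl | h2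
        · rw [hp₀m₂]; omega
        · have : p₀ i = 0 := by
            rw [hp₀_def]
            simp [Finsupp.single_eq_of_ne' h1, Finsupp.single_eq_of_ne' h2]
          omega
    have hp₀_tot : ftot p₀ = 2 := by
      rw [hp₀_def, ftot_add, ftot_single, ftot_single]
    have htota : ftot a = ordS S (b + mult S) := ha.2.2
    have hbA : h < ordS S (b + mult S) := hbD.2.2
    obtain ⟨p, hpp₀, hpa, hpt⟩ := nsg_fill a (h - 2) p₀ hp₀_le (by omega)
    rw [hp₀_tot] at hpt
    have hpt' : ftot p = h := by omega
    have hp_supp : ↑p.support ⊆ MinGens S := fun i hi => ha.1 (supp_sub_of_le hpa hi)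
    have hm₁p : m₁ ∈ p.support := by
      have h1 := Finsupp.le_def.1 hpp₀ m₁
      rw [hp₀m₁] at h1
      exact Finsupp.mem_support_iff.2 (by omega)
    have hm₂p : m₂ ∈ p.support := by
      have h1 := Finsupp.le_def.1 hpp₀ m₂
      rw [hp₀m₂] at h1
      exact Finsupp.mem_support_iff.2 (by omega)
    have hpc : 2 ≤ p.support.card := Finset.one_lt_card.2 ⟨m₁, hm₁p, m₂, hm₂p, hmne⟩
    have hvCK : fval p ∈ CK S h := nsg_subsum_CK hS hh2 hbD ha hpa hpt'
    have havoid : ∀ x ∈ Ts, nsgPsi S h x ≠ fval p := by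
      intro x hx hcontra
      obtain ⟨hn, hxe, hpsi⟩ := nsgPsi_spec (hTE x hx)
      have hfvp : fval p = h * (hTE x hx).choose := by rw [← hcontra, hpsi]
      have h2s : 2 ≤ SuppCard S (x + mult S) :=
        nsg_T_avoid hS hh2 hx.1 hn hxe hp_supp hpt' hpc hfvp
      have := hx.2
      omega
    have hmaps' : ∀ x ∈ Ts, nsgPsi S h x ∈ CK S h \ {fval p} := fun x hx =>
      ⟨hmaps x hx, by
        simp only [Set.mem_singleton_iff]
        exact havoid x hx⟩
    have h2 : Ts.ncard ≤ (CK S h \ {fval p}).ncard :=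
      Set.ncard_le_ncard_of_injOn _ hmaps' hinj hCK_fin.diff
    have h3 : (CK S h \ {fval p}).ncard = (CK S h).ncard - 1 :=
      Set.ncard_diff_singleton_of_mem hvCK
    have h4 : 1 ≤ (CK S h).ncard := (Set.ncard_pos hCK_fin).2 ⟨fval p, hvCK⟩
    have hBs1 : Bs ⊆ {b} := by
      intro x hx
      simp only [Set.mem_singleton_iff]
      exact hsub x hx b hb
    have h5 : (DK S h).ncard ≤ (Ts ∪ Bs).ncard :=
      Set.ncard_le_ncard hunion ((hDK_fin.subset hTs_sub).union (hDK_fin.subset hBs_sub))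
    have h6 : (Ts ∪ Bs).ncard ≤ Ts.ncard + Bs.ncard := Set.ncard_union_le _ _
    have h7 : Bs.ncard ≤ 1 := by
      calc Bs.ncard ≤ ({b} : Set ℕ).ncard :=
            Set.ncard_le_ncard hBs1 (Set.finite_singleton b)
        _ = 1 := Set.ncard_singleton b
    omega
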